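/- Let K be a field of characteristic zero, r ≥ 1, m ≥ 1. Let g_1, …, g_m ∈ M_r(K) with g_m invertible, and let η_0, η_1, …, η_{m-1} ∈ M_r(K). Assume that for each ℓ = 1, …, m−1 one has [g_m, η_ℓ] + [g_{m-1}, η_{ℓ+1}] + ⋯ + [g_{ℓ+1}, η_{m-1}] = 0 (i.e. Σ_{s=ℓ}^{m-1} [g_{m+ℓ-s}, η_s] = 0). Then Tr( g_m^{-1} · Σ_{s=0}^{m-1} [g_{m-s}, η_s] ) = 0, where Tr denotes the usual trace on M_r(K) and [x,y] = xy − yx. -/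

import Mathlib

open PowerSeries Matrix Finset

private noncomputable def pterm {K : Type*} [Field K] (r : ℕ) (e : ℕ)
    (a : Matrix (Fin r) (Fin r) K) : Matrix (Fin r) (Fin r) (PowerSeries K) :=
  (PowerSeries.X : PowerSeries K) ^ e • a.map (PowerSeries.C (R := K))

private lemma pterm_mul {K : Type*} [Field K] {r : ℕ} (e f : ℕ)
    (a b : Matrix (Fin r) (Fin r) K) :
    pterm r e a * pterm r f b = pterm r (e + f) (a * b) := by
  unfold pterm
  rw [smul_mul_smul_comm, ← pow_add, ← Matrix.map_mul]

private lemma pterm_sub {K : Type*} [Field K] {r : ℕ} (e : ℕ)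
    (a b : Matrix (Fin r) (Fin r) K) :
    pterm r e (a - b) = pterm r e a - pterm r e b := by
  unfold pterm
  ext i j
  simp [Matrix.map_apply, mul_sub]

private noncomputable def cmap {K : Type*} [Field K] (r t : ℕ) :
    Matrix (Fin r) (Fin r) (PowerSeries K) →+ Matrix (Fin r) (Fin r) K :=
  ((PowerSeries.coeff (R := K) t).toAddMonoidHom).mapMatrix

private lemma cmap_apply {K : Type*} [Field K] {r t : ℕ}
    (A : Matrix (Fin r) (Fin r) (PowerSeries K)) (i j : Fin r) :
    cmap r t A i j = PowerSeries.coeff (R := K) t (A i j) := rfl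

private lemma cmap_pterm {K : Type*} [Field K] {r : ℕ} (t e : ℕ)
    (a : Matrix (Fin r) (Fin r) K) :
    cmap r t (pterm r e a) = if e = t then a else 0 := by
  ext i j
  rw [cmap_apply]
  simp only [pterm, Matrix.smul_apply, Matrix.map_apply, smul_eq_mul,
    mul_comm ((PowerSeries.X : PowerSeries K) ^ e), PowerSeries.coeff_C_mul_X_pow]
  by_cases h : e = t
  · simp [h]
  · simp [h, Ne.symm h]

private lemma reindex_aux {M : Type*} [AddCommGroup M] (m t : ℕ) (hm : 1 ≤ m) (ht : t ≤ m - 1)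
    (F : ℕ → ℕ → M) :
    (∑ c ∈ Finset.range m, ∑ s ∈ Finset.range m,
        if c + (m - 1 - s) = t then F (m - c) s else 0)
      = ∑ s ∈ Finset.Icc (m - 1 - t) (m - 1), F (m + (m - 1 - t) - s) s := by
  rw [← Finset.sum_product', ← Finset.sum_filter]
  refine Finset.sum_nbij' (fun p => p.2) (fun s => (t - (m - 1 - s), s)) ?_ ?_ ?_ ?_ ?_
  · rintro ⟨c, s⟩ hp
    simp only [Finset.mem_filter, Finset.mem_product, Finset.mem_range] at hp
    simp only [Finset.mem_Icc]
    omega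
  · intro s hs
    simp only [Finset.mem_Icc] at hs
    simp only [Finset.mem_filter, Finset.mem_product, Finset.mem_range]
    omega
  · rintro ⟨c, s⟩ hp
    simp only [Finset.mem_filter, Finset.mem_product, Finset.mem_range] at hp
    have h1 : t - (m - 1 - s) = c := by omega
    simp [h1]
  · intro s hs; rfl
  · rintro ⟨c, s⟩ hp
    simp only [Finset.mem_filter, Finset.mem_product, Finset.mem_range] at hp
    have hidx : m - c = m + (m - 1 - t) - s := by omega
    rw [hidx]

theorem statement7 {K : Type*} [Field K] [CharZero K] (r m : ℕ) (hr : 1 ≤ r) (hm : 1 ≤ m)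
    (g η : ℕ → Matrix (Fin r) (Fin r) K)
    (hg : IsUnit (g m))
    (hvert : ∀ ℓ : ℕ, 1 ≤ ℓ → ℓ ≤ m - 1 →
      ∑ s ∈ Finset.Icc ℓ (m - 1), (g (m + ℓ - s) * η s - η s * g (m + ℓ - s)) = 0) :
    Matrix.trace ((g m)⁻¹ * ∑ s ∈ Finset.range m, (g (m - s) * η s - η s * g (m - s))) = 0 := by
  classical
  set G : Matrix (Fin r) (Fin r) (PowerSeries K) :=
    ∑ c ∈ range m, pterm r c (g (m - c)) with hGdef
  set N : Matrix (Fin r) (Fin r) (PowerSeries K) :=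
    ∑ s ∈ range m, pterm r (m - 1 - s) (η s) with hNdef
  -- constant coefficient of matrices, as ring hom
  have hc0 : ∀ A : Matrix (Fin r) (Fin r) (PowerSeries K),
      cmap r 0 A = ((PowerSeries.constantCoeff (R := K)).mapMatrix : _ →+* _) A := by
    intro A; ext i j
    rw [cmap_apply]
    simp [PowerSeries.coeff_zero_eq_constantCoeff, RingHom.mapMatrix_apply, Matrix.map_apply]
  have hG0 : cmap r 0 G = g m := by
    rw [hGdef, map_sum]
    rw [Finset.sum_congr rfl (fun c _ => cmap_pterm 0 c (g (m - c)))]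
    rw [Finset.sum_ite_eq' (range m) 0 (fun c => g (m - c))]
    simp [Finset.mem_range.mpr hm]
  -- G is a unit
  have hGu : IsUnit G := by
    rw [Matrix.isUnit_iff_isUnit_det, PowerSeries.isUnit_iff_constantCoeff, RingHom.map_det]
    have hmap : (PowerSeries.constantCoeff (R := K)).mapMatrix G = g m := by
      rw [← hc0, hG0]
    rw [hmap]
    exact (Matrix.isUnit_iff_isUnit_det _).mp hg
  obtain ⟨u, hu⟩ := hGu
  set B : Matrix (Fin r) (Fin r) (PowerSeries K) := ↑u⁻¹ with hBdef
  have h1 : B * G = 1 := by rw [hBdef, ← hu]; exact u.inv_mul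
  have h2 : G * B = 1 := by rw [hBdef, ← hu]; exact u.mul_inv
  -- the trace identity
  have htr : Matrix.trace (B * (G * N - N * G)) = 0 := by
    rw [mul_sub, Matrix.trace_sub, ← Matrix.mul_assoc, h1, Matrix.one_mul,
      ← Matrix.mul_assoc, Matrix.trace_mul_comm, ← Matrix.mul_assoc, h2, Matrix.one_mul,
      sub_self]
  -- expansion of the commutator
  have hP : G * N - N * G = ∑ c ∈ range m, ∑ s ∈ range m,
      pterm r (c + (m - 1 - s)) (g (m - c) * η s - η s * g (m - c)) := by
    have e1 : G * N = ∑ c ∈ range m, ∑ s ∈ range m,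
        pterm r (c + (m - 1 - s)) (g (m - c) * η s) := by
      rw [hGdef, hNdef, Finset.sum_mul_sum]
      exact Finset.sum_congr rfl fun c _ => Finset.sum_congr rfl fun s _ => pterm_mul ..
    have e2 : N * G = ∑ c ∈ range m, ∑ s ∈ range m,
        pterm r (c + (m - 1 - s)) (η s * g (m - c)) := by
      rw [hNdef, hGdef, Finset.sum_mul_sum, Finset.sum_comm]
      exact Finset.sum_congr rfl fun c _ => Finset.sum_congr rfl fun s _ => by
        rw [pterm_mul, add_comm]
    rw [e1, e2, ← Finset.sum_sub_distrib]
    exact Finset.sum_congr rfl fun c _ => by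
      rw [← Finset.sum_sub_distrib]
      exact Finset.sum_congr rfl fun s _ => (pterm_sub ..).symm
  -- coefficients of the commutator
  have hcoeff : ∀ t : ℕ, t ≤ m - 1 → cmap r t (G * N - N * G) =
      ∑ s ∈ Finset.Icc (m - 1 - t) (m - 1),
        (g (m + (m - 1 - t) - s) * η s - η s * g (m + (m - 1 - t) - s)) := by
    intro t ht
    rw [hP]
    simp only [map_sum, cmap_pterm]
    exact reindex_aux m t hm ht (fun k s => g k * η s - η s * g k)
  -- low coefficients vanish
  have hlow : ∀ t : ℕ, t < m - 1 → cmap r t (G * N - N * G) = 0 := by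
    intro t ht
    rw [hcoeff t (le_of_lt ht)]
    exact hvert (m - 1 - t) (by omega) (by omega)
  -- top coefficient
  have htop : cmap r (m - 1) (G * N - N * G) =
      ∑ s ∈ Finset.range m, (g (m - s) * η s - η s * g (m - s)) := by
    rw [hcoeff (m - 1) le_rfl]
    have h0 : m - 1 - (m - 1) = 0 := by omega
    rw [h0]
    have hIcc : Finset.Icc 0 (m - 1) = Finset.range m := by
      ext x; simp only [Finset.mem_Icc, Finset.mem_range]; omega
    rw [hIcc]
    exact Finset.sum_congr rfl fun s _ => by rw [add_zero]
  -- constant coefficient of B is (g m)⁻¹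
  have hB0 : cmap r 0 B = (g m)⁻¹ := by
    have hmul : cmap r 0 B * g m = 1 := by
      rw [hc0, ← hG0, hc0, ← _root_.map_mul, h1, _root_.map_one]
    exact (Matrix.inv_eq_left_inv hmul).symm
  -- extract coefficient m-1 of the trace
  have hexp : ∀ (A C : Matrix (Fin r) (Fin r) (PowerSeries K)),
      Matrix.trace (A * C) = ∑ i, ∑ j, A i j * C j i := by
    intro A C
    simp [Matrix.trace, Matrix.mul_apply, Matrix.diag]
  have hexp' : ∀ (A C : Matrix (Fin r) (Fin r) K),
      Matrix.trace (A * C) = ∑ i, ∑ j, A i j * C j i := by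
    intro A C
    simp [Matrix.trace, Matrix.mul_apply, Matrix.diag]
  have hkey : PowerSeries.coeff (R := K) (m - 1) (Matrix.trace (B * (G * N - N * G))) =
      Matrix.trace ((g m)⁻¹ * ∑ s ∈ Finset.range m, (g (m - s) * η s - η s * g (m - s))) := by
    rw [hexp, map_sum]
    rw [Finset.sum_congr rfl (fun i _ => map_sum (PowerSeries.coeff (R := K) (m - 1)) _ _)]
    rw [hexp', ← hB0, ← htop]
    refine Finset.sum_congr rfl fun i _ => Finset.sum_congr rfl fun j _ => ?_
    rw [PowerSeries.coeff_mul]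
    rw [Finset.sum_eq_single_of_mem ((0 : ℕ), m - 1) (by simp)]
    · rfl
    rintro ⟨a, b⟩ hab hne
    replace hab : a + b = m - 1 := Finset.HasAntidiagonal.mem_antidiagonal.mp hab
    have hb : b < m - 1 := by
      have : ¬(a = 0 ∧ b = m - 1) := by simpa [Prod.ext_iff] using hne
      omega
    have hz : PowerSeries.coeff (R := K) b ((G * N - N * G) j i) = 0 := by
      have hz0 := hlow b hb
      have : cmap r b (G * N - N * G) j i = (0 : Matrix (Fin r) (Fin r) K) j i := by
        rw [hz0]
      rw [cmap_apply] at this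
      simpa using this
    rw [hz, mul_zero]
  rw [← hkey, htr, map_zero]
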